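/- Let M(E) be the graph monoid of a row-finite directed graph E: the commutative monoid generated by elements a_v for v ∈ E⁰ subject to a_v = Σ_{e ∈ s⁻¹(v)} a_{r(e)} for every vertex v that is not a sink. If H is a hereditary subset of E⁰ (v ≤ w and w ∈ H imply v ∈ H, with ≤ the path-way pre-order), then the submonoid of M(E) generated by {a_v : v ∈ H} is an order-ideal of M(E). -/

import Mathlib

namespace GM17

variable {V E : Type*} (s r : E → V) [∀ v : V, Fintype {e : E // s e = v}]

def ranges (v : V) : Multiset V :=
  (Finset.univ : Finset {e : E // s e = v}).val.map (fun e => r e.1)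

def Step (a b : Multiset V) : Prop :=
  ∃ v : V, Nonempty {e : E // s e = v} ∧ ∃ k, a = {v} + k ∧ b = ranges s r v + k

lemma step_add_right {a b : Multiset V} (h : Step s r a b) (k : Multiset V) :
    Step s r (a + k) (b + k) := by
  obtain ⟨v, hv, m, rfl, rfl⟩ := h
  exact ⟨v, hv, m + k, by rw [add_assoc], by rw [add_assoc]⟩

lemma rtg_add {a b c d : Multiset V} (h1 : Relation.ReflTransGen (Step s r) a b)
    (h2 : Relation.ReflTransGen (Step s r) c d) :
    Relation.ReflTransGen (Step s r) (a + c) (b + d) := by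
  have h1' : Relation.ReflTransGen (Step s r) (a + c) (b + c) := by
    induction h1 with
    | refl => exact .refl
    | tail _ hstep ih => exact ih.tail (step_add_right s r hstep c)
  have h2' : Relation.ReflTransGen (Step s r) (b + c) (b + d) := by
    induction h2 with
    | refl => exact .refl
    | tail _ hstep ih =>
      refine ih.tail ?_
      rw [add_comm b _, add_comm b _]
      exact step_add_right s r hstep b
  exact h1'.trans h2'

lemma diamond : ∀ a b c : Multiset V, Step s r a b → Step s r a c →
    ∃ d, Relation.ReflGen (Step s r) b d ∧ Relation.ReflTransGen (Step s r) c d := by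
  rintro a b c ⟨v, hv, k, rfl, rfl⟩ ⟨w, hw, k', he, rfl⟩
  rw [Multiset.singleton_add, Multiset.singleton_add, Multiset.cons_eq_cons] at he
  rcases he with ⟨rfl, rfl⟩ | ⟨hne, m, rfl, rfl⟩
  · exact ⟨ranges s r v + k, .refl, .refl⟩
  · refine ⟨ranges s r v + ranges s r w + m, .single ?_, .single ?_⟩
    · exact ⟨w, hw, ranges s r v + m,
        by rw [Multiset.add_cons, Multiset.singleton_add], by abel⟩
    · exact ⟨v, hv, ranges s r w + m,
        by rw [Multiset.add_cons, Multiset.singleton_add], by abel⟩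

abbrev J (a b : Multiset V) : Prop := Relation.Join (Relation.ReflTransGen (Step s r)) a b

lemma J_equiv : Equivalence (J s r) :=
  Relation.equivalence_join_reflTransGen (diamond s r)

def Jcon : AddCon (Multiset V) where
  r := J s r
  iseqv := J_equiv s r
  add' := by
    rintro a b c d ⟨x, hax, hbx⟩ ⟨y, hcy, hdy⟩
    exact ⟨x + y, rtg_add s r hax hcy, rtg_add s r hbx hdy⟩

def R (a b : Multiset V) : Prop :=
  ∃ v : V, Nonempty {e : E // s e = v} ∧ a = ({v} : Multiset V) ∧
    b = (Finset.univ : Finset {e : E // s e = v}).val.map (fun e => r e.1)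

lemma step_le_con {a b : Multiset V} (h : Step s r a b) : addConGen (R s r) a b := by
  obtain ⟨v, hv, k, rfl, rfl⟩ := h
  exact AddConGen.Rel.add (AddConGen.Rel.of _ _ ⟨v, hv, rfl, rfl⟩) (AddConGen.Rel.refl k)

lemma rtg_le_con {a b : Multiset V} (h : Relation.ReflTransGen (Step s r) a b) :
    addConGen (R s r) a b := by
  induction h with
  | refl => exact (addConGen (R s r)).refl _
  | tail _ hstep ih => exact (addConGen (R s r)).trans ih (step_le_con s r hstep)

lemma con_le_J : addConGen (R s r) ≤ Jcon s r := by
  refine AddCon.addConGen_le.2 ?_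
  rintro a b ⟨v, hv, rfl, rfl⟩
  refine ⟨ranges s r v, Relation.ReflTransGen.single ⟨v, hv, 0, by simp, by simp [ranges]⟩, .refl⟩

lemma split {c : Multiset V} {m : Multiset V} (h : Relation.ReflTransGen (Step s r) m c) :
    ∀ a b, m = a + b → ∃ c₁ c₂, c = c₁ + c₂ ∧
      Relation.ReflTransGen (Step s r) a c₁ ∧ Relation.ReflTransGen (Step s r) b c₂ := by
  induction h using Relation.ReflTransGen.head_induction_on with
  | refl => exact fun a b hab => ⟨a, b, hab, .refl, .refl⟩
  | head hstep _ ih =>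
    rintro a b rfl
    obtain ⟨v, hv, k, he, rfl⟩ := hstep
    have hvmem : v ∈ a + b := by rw [he]; simp
    rcases Multiset.mem_add.1 hvmem with hva | hvb
    · obtain ⟨a', rfl⟩ := Multiset.exists_cons_of_mem hva
      rw [← Multiset.singleton_add, add_assoc] at he
      have hk : k = a' + b := add_left_cancel he.symm
      obtain ⟨c₁, c₂, rfl, h1, h2⟩ := ih (ranges s r v + a') b (by rw [hk, add_assoc])
      refine ⟨c₁, c₂, rfl, .trans (.single ?_) h1, h2⟩
      exact ⟨v, hv, a', Multiset.singleton_add v a', rfl⟩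
    · obtain ⟨b', rfl⟩ := Multiset.exists_cons_of_mem hvb
      rw [← Multiset.singleton_add, add_comm a, add_assoc] at he
      have hk : k = b' + a := add_left_cancel he.symm
      obtain ⟨c₂, c₁, rfl, h2, h1⟩ := ih (ranges s r v + b') a (by rw [hk, add_assoc])
      refine ⟨c₁, c₂, add_comm _ _, h1, .trans (.single ?_) h2⟩
      exact ⟨v, hv, b', Multiset.singleton_add v b', rfl⟩

lemma support_step {H : Set V}
    (hH : ∀ v w : V, Relation.ReflTransGen (fun a b => ∃ e : E, s e = a ∧ r e = b) w v →
      w ∈ H → v ∈ H)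
    {a b : Multiset V} (h : Step s r a b) (ha : ∀ x ∈ a, x ∈ H) : ∀ x ∈ b, x ∈ H := by
  obtain ⟨v, hv, k, rfl, rfl⟩ := h
  intro x hx
  rcases Multiset.mem_add.1 hx with hx | hx
  · obtain ⟨e, -, rfl⟩ := Multiset.mem_map.1 hx
    exact hH _ v (Relation.ReflTransGen.single ⟨e.1, e.2, rfl⟩) (ha v (by simp))
  · exact ha x (by simp [hx])

lemma support_rtg {H : Set V}
    (hH : ∀ v w : V, Relation.ReflTransGen (fun a b => ∃ e : E, s e = a ∧ r e = b) w v →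
      w ∈ H → v ∈ H)
    {a b : Multiset V} (h : Relation.ReflTransGen (Step s r) a b)
    (ha : ∀ x ∈ a, x ∈ H) : ∀ x ∈ b, x ∈ H := by
  induction h with
  | refl => exact ha
  | tail _ hstep ih => exact support_step s r hH hstep ih

end GM17

theorem stmt_17 (V E : Type*) (s r : E → V) [∀ v : V, Fintype {e : E // s e = v}]
    (con : AddCon (Multiset V))
    (hcon : con = addConGen (fun a b => ∃ v : V, Nonempty {e : E // s e = v} ∧
      a = ({v} : Multiset V) ∧
      b = (Finset.univ : Finset {e : E // s e = v}).val.map (fun e => r e.1)))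
    (H : Set V)
    (hH : ∀ v w : V,
      Relation.ReflTransGen (fun a b => ∃ e : E, s e = a ∧ r e = b) w v →
      w ∈ H → v ∈ H) :
    ∀ x y : con.Quotient,
      x + y ∈ AddSubmonoid.closure ((fun v => con.mk' ({v} : Multiset V)) '' H) →
      x ∈ AddSubmonoid.closure ((fun v => con.mk' ({v} : Multiset V)) '' H) ∧
      y ∈ AddSubmonoid.closure ((fun v => con.mk' ({v} : Multiset V)) '' H) := by
  intro x y hxy
  -- characterize membership in the closure
  have key : ∀ z : con.Quotient,
      z ∈ AddSubmonoid.closure ((fun v => con.mk' ({v} : Multiset V)) '' H) ↔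
      ∃ m : Multiset V, (∀ v ∈ m, v ∈ H) ∧ con.mk' m = z := by
    intro z
    constructor
    · intro hz
      induction hz using AddSubmonoid.closure_induction with
      | mem w hw =>
        obtain ⟨v, hv, rfl⟩ := hw
        exact ⟨{v}, by simpa using hv, rfl⟩
      | zero => exact ⟨0, by simp, map_zero _⟩
      | add a b _ _ iha ihb =>
        obtain ⟨m₁, hm₁, rfl⟩ := iha
        obtain ⟨m₂, hm₂, rfl⟩ := ihb
        exact ⟨m₁ + m₂, fun v hv => (Multiset.mem_add.1 hv).elim (hm₁ v) (hm₂ v),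
          map_add _ _ _⟩
    · rintro ⟨m, hm, rfl⟩
      induction m using Multiset.induction with
      | empty => simpa using (AddSubmonoid.closure _).zero_mem
      | cons a t ih =>
        have : con.mk' (a ::ₘ t) = con.mk' ({a} : Multiset V) + con.mk' t := by
          rw [← map_add, Multiset.singleton_add]
        rw [this]
        exact AddSubmonoid.add_mem _
          (AddSubmonoid.subset_closure ⟨a, hm a (by simp), rfl⟩)
          (ih (fun v hv => hm v (by simp [hv])))
  obtain ⟨m, hm, hmk⟩ := (key _).1 hxy
  obtain ⟨m₁, rfl⟩ := con.mk'_surjective x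
  obtain ⟨m₂, rfl⟩ := con.mk'_surjective y
  have hmk2 : con.mk' m = con.mk' (m₁ + m₂) := by rw [map_add]; exact hmk
  have hcon' : con m (m₁ + m₂) := (AddCon.eq _).1 hmk2
  subst hcon
  have hJ : GM17.Jcon s r m (m₁ + m₂) := GM17.con_le_J s r hcon'
  obtain ⟨c, hmc, hc12⟩ := hJ
  obtain ⟨c₁, c₂, rfl, h1, h2⟩ := GM17.split s r hc12 m₁ m₂ rfl
  have hcsupp : ∀ x ∈ c₁ + c₂, x ∈ H := GM17.support_rtg s r hH hmc hm
  constructor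
  · exact (key _).2 ⟨c₁, fun v hv => hcsupp v (Multiset.mem_add.2 (Or.inl hv)),
      ((AddCon.eq _).2 (GM17.rtg_le_con s r h1)).symm⟩
  · exact (key _).2 ⟨c₂, fun v hv => hcsupp v (Multiset.mem_add.2 (Or.inr hv)),
      ((AddCon.eq _).2 (GM17.rtg_le_con s r h2)).symm⟩
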